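/- Fix o ∈ SNA_n(ℂ) and define on the induced vector space the bracket [a,b]_o := [a,b] - [a,o] + [o,o] - [o,b] where [x,y] = xy - yx + y. Then [a,b]_o = (a-o)(b-o) - (b-o)(a-o) + o, and the map a ↦ a - o is a Lie algebra isomorphism from (V(SNA_n(ℂ)_o), [-,-]_o) onto sl_{n+1}(ℂ)₀ with the commutator bracket. -/
import Mathlib



/-- `SNA n ℂ`: traceless `(n+1) × (n+1)` complex matrices in which the sum of
the entries in every row and every column equals `1`. -/
def SNA (n : ℕ) : Set (Matrix (Fin (n + 1)) (Fin (n + 1)) ℂ) :=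
  {a | a.trace = 0 ∧ ∀ j, (∑ i, a i j) = 1 ∧ (∑ i, a j i) = 1}

/-- `sl_{n+1}(ℂ)₀` as a set: traceless matrices with vanishing row and
column sums. -/
def sl0Set (n : ℕ) : Set (Matrix (Fin (n + 1)) (Fin (n + 1)) ℂ) :=
  {a | a.trace = 0 ∧ ∀ j, (∑ i, a i j) = 0 ∧ (∑ i, a j i) = 0}

/-- Fix `o ∈ SNA n ℂ` and on the induced vector space `V(SNA n ℂ)_o` (with
`a +ₒ b = a - o + b`, `λ ·ₒ a = λa + (1-λ)o`, zero `o`) define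
`[a,b]ₒ := [a,b] - [a,o] + [o,o] - [o,b]` (in the group with neutral `o`),
where `[x,y] = xy - yx + y`.  Then `[a,b]ₒ = (a-o)(b-o) - (b-o)(a-o) + o`,
and `a ↦ a - o` is a Lie algebra isomorphism onto `sl_{n+1}(ℂ)₀` with the
commutator bracket. -/
theorem SNA_linearisation_iso_sl0 (n : ℕ)
    (o : Matrix (Fin (n + 1)) (Fin (n + 1)) ℂ) (ho : o ∈ SNA n) :
    let br : Matrix (Fin (n+1)) (Fin (n+1)) ℂ → _ → Matrix (Fin (n+1)) (Fin (n+1)) ℂ :=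
      fun x y => x * y - y * x + y
    -- `x - y` and `x + y` in the group `A_o` (neutral element `o`)
    let bro : Matrix (Fin (n+1)) (Fin (n+1)) ℂ → _ → Matrix (Fin (n+1)) (Fin (n+1)) ℂ :=
      fun a b => br a b - br a o + br o o - br o b + o  -- alternating sum in `A_o`
    let φ : Matrix (Fin (n+1)) (Fin (n+1)) ℂ → Matrix (Fin (n+1)) (Fin (n+1)) ℂ :=
      fun a => a - o
    -- the reduced bracket is a shifted commutator
    (∀ a ∈ SNA n, ∀ b ∈ SNA n,
      bro a b = (a - o) * (b - o) - (b - o) * (a - o) + o) ∧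
    -- φ is a bijection from `SNA n ℂ` onto `sl0Set n`
    (∀ a ∈ SNA n, φ a ∈ sl0Set n) ∧
    (∀ x ∈ sl0Set n, ∃! a, a ∈ SNA n ∧ φ a = x) ∧
    -- φ is linear for the vector space structure `V((SNA n ℂ)_o)`
    (∀ a ∈ SNA n, ∀ b ∈ SNA n, φ (a - o + b) = φ a + φ b) ∧
    (∀ (l : ℂ), ∀ a ∈ SNA n, φ (l • a + (1 - l) • o) = l • φ a) ∧
    -- φ intertwines `[-,-]ₒ` with the commutator
    (∀ a ∈ SNA n, ∀ b ∈ SNA n, φ (bro a b) = φ a * φ b - φ b * φ a) := by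
  intro br bro φ
  refine ⟨?_, ?_, ?_, ?_, ?_, ?_⟩
  · intro a _ b _
    show (a*b - b*a + b) - (a*o - o*a + o) + (o*o - o*o + o) - (o*b - b*o + b) + o
      = (a - o) * (b - o) - (b - o) * (a - o) + o
    noncomm_ring
  · intro a ha
    obtain ⟨hat, has⟩ := ha
    obtain ⟨hot, hos⟩ := ho
    refine ⟨?_, fun j => ⟨?_, ?_⟩⟩
    · show (a - o).trace = 0
      simp [Matrix.trace_sub, hat, hot]
    · show (∑ i, (a - o) i j) = 0
      simp [Matrix.sub_apply, Finset.sum_sub_distrib, (has j).1, (hos j).1]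
    · show (∑ i, (a - o) j i) = 0
      simp [Matrix.sub_apply, Finset.sum_sub_distrib, (has j).2, (hos j).2]
  · intro x hx
    obtain ⟨hxt, hxs⟩ := hx
    obtain ⟨hot, hos⟩ := ho
    refine ⟨x + o, ⟨⟨by simp [Matrix.trace_add, hxt, hot], fun j => ?_⟩, by simp [φ]⟩, ?_⟩
    · constructor
      · simp [Matrix.add_apply, Finset.sum_add_distrib, (hxs j).1, (hos j).1]
      · simp [Matrix.add_apply, Finset.sum_add_distrib, (hxs j).2, (hos j).2]
    · rintro a ⟨-, hφ⟩
      have : a - o = x := hφ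
      linear_combination (norm := abel) this
  · intro a _ b _
    show (a - o + b) - o = (a - o) + (b - o)
    abel
  · intro l a _
    show l • a + (1 - l) • o - o = l • (a - o)
    rw [smul_sub, sub_smul, one_smul]
    abel
  · intro a _ b _
    show (a*b - b*a + b) - (a*o - o*a + o) + (o*o - o*o + o) - (o*b - b*o + b) + o - o
      = (a - o) * (b - o) - (b - o) * (a - o)
    noncomm_ring
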